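/- Let n ≥ 2, let i_1, …, i_n be integers with each i_j ≥ 2^(2^(n-1)), let B = {0,…,i_1 − 1} × ⋯ × {0,…,i_n − 1} ⊆ ℤ^n, and let G be a connected graph admitting a map f : B → V(G) such that d_G(f(u), f(v)) = d₁(u,v) for all u, v ∈ B (i.e., G contains an isometric copy of the grid P_{i_1} □ ⋯ □ P_{i_n}). Then G has a general position set of cardinality 2^(2^(n-1)); in particular gp(G) ≥ 2^(2^(n-1)). -/

import Mathlib

/-- The ℓ1 (graph) distance on the integer lattice ℤ^n, equal to the graph
distance of the grid `P_{i_1} □ ⋯ □ P_{i_n}` on the box. -/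
def d1 {n : ℕ} (u v : Fin n → ℤ) : ℤ := ∑ j, |u j - v j|

namespace GpAux

/-- `maskAux t len` has bit `p` set iff `p < len` and bit `t` of `p` is false. -/
def maskAux (t : ℕ) : ℕ → ℕ
  | 0 => 0
  | len + 1 => maskAux t len + (if Nat.testBit len t then 0 else 2 ^ len)

lemma maskAux_lt (t len : ℕ) : maskAux t len < 2 ^ len := by
  induction len with
  | zero => simp [maskAux]
  | succ L ih =>
    have : (2:ℕ) ^ (L+1) = 2 ^ L + 2 ^ L := by ring
    unfold maskAux
    split <;> omega

lemma testBit_maskAux (t len q : ℕ) :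
    (maskAux t len).testBit q = (decide (q < len) && !q.testBit t) := by
  induction len with
  | zero => simp [maskAux]
  | succ L ih =>
    have hlt := maskAux_lt t L
    unfold maskAux
    by_cases hL : Nat.testBit L t
    · simp only [hL, if_pos, add_zero, ih]
      rcases Nat.lt_trichotomy q L with h | h | h
      · simp [h, Nat.lt_succ_of_lt h]
      · subst h; simp [hL]
      · have e1 : decide (q < L) = false := decide_eq_false (by omega)
        have e2 : decide (q < L + 1) = false := decide_eq_false (by omega)
        simp [e1, e2]
        intro; omega
    · simp only [hL, if_neg, Bool.not_eq_true]
      rw [Nat.add_comm]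
      rcases Nat.lt_trichotomy q L with h | h | h
      · rw [Nat.testBit_two_pow_add_gt h, ih]
        simp [h, Nat.lt_succ_of_lt h]
      · subst h
        rw [Nat.testBit_two_pow_add_eq]
        have : (maskAux t q).testBit q = false := Nat.testBit_eq_false_of_lt hlt
        simp [this, hL]
      · have hbig : 2 ^ L + maskAux t L < 2 ^ q := by
          have h1 : (2:ℕ) ^ (L+1) ≤ 2 ^ q := Nat.pow_le_pow_right (by norm_num) h
          have : (2:ℕ) ^ (L+1) = 2 ^ L + 2 ^ L := by ring
          omega
        rw [Nat.testBit_eq_false_of_lt hbig]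
        have e2 : decide (q < L + 1) = false := decide_eq_false (by omega)
        simp [e2]
        intro; omega

/-- The mask for coordinate `j` (with `j = 0` the identity coordinate). -/
def mask (m : ℕ) : ℕ → ℕ
  | 0 => 0
  | t + 1 => maskAux t (2 ^ m)

lemma mask_lt (m j : ℕ) : mask m j < 2 ^ 2 ^ m := by
  cases j with
  | zero => simpa [mask] using Nat.pos_pow_of_pos _ (by norm_num : 0 < 2)
  | succ t => exact maskAux_lt t (2 ^ m)

/-- The point family: `pt n m k = (k ⊕ mask_j)_j`. -/
def pt (n m k : ℕ) : Fin n → ℤ := fun j => ((k ^^^ mask m (j : ℕ) : ℕ) : ℤ)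

/-- Existence of a highest differing bit. -/
lemma exists_msb {a b : ℕ} (h : a ≠ b) :
    ∃ p, a.testBit p ≠ b.testBit p ∧ ∀ q, p < q → a.testBit q = b.testBit q := by
  classical
  have hbound : ∀ r, a.testBit r ≠ b.testBit r → r < a + b + 1 := by
    intro r hr
    by_contra hge
    push_neg at hge
    have ha : a < 2 ^ r := lt_of_le_of_lt (by omega) (Nat.lt_two_pow_self (n := r))
    have hb : b < 2 ^ r := lt_of_le_of_lt (by omega) (Nat.lt_two_pow_self (n := r))
    rw [Nat.testBit_eq_false_of_lt ha, Nat.testBit_eq_false_of_lt hb] at hr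
    exact hr rfl
  set D := (Finset.range (a + b + 1)).filter (fun r => a.testBit r ≠ b.testBit r) with hD
  have hne : D.Nonempty := by
    by_contra hempty
    apply h
    apply Nat.eq_of_testBit_eq
    intro r
    by_contra hr
    exact hempty ⟨r, by simp [hD, Finset.mem_filter, Finset.mem_range, hbound r hr, hr]⟩
  refine ⟨D.max' hne, ?_, ?_⟩
  · have := D.max'_mem hne
    simp only [hD, Finset.mem_filter] at this
    exact this.2
  · intro q hq
    by_contra hdiff
    have hqD : q ∈ D := by simp [hD, Finset.mem_filter, Finset.mem_range, hbound q hdiff, hdiff]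
    exact absurd (D.le_max' q hqD) (by omega)

/-- At the highest differing bit, the smaller number has bit `false`. -/
lemma msb_bits {a b p : ℕ} (hab : a < b) (hp : a.testBit p ≠ b.testBit p)
    (hq : ∀ q, p < q → a.testBit q = b.testBit q) :
    a.testBit p = false ∧ b.testBit p = true := by
  cases ha : a.testBit p <;> cases hb : b.testBit p
  · rw [ha, hb] at hp; exact absurd rfl hp
  · exact ⟨rfl, rfl⟩
  · exfalso
    have : b < a := Nat.lt_of_testBit p hb ha (fun j hj => (hq j hj).symm)
    omega
  · rw [ha, hb] at hp; exact absurd rfl hp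

/-- XOR with a mask: comparison determined by the mask's bit at the msb. -/
lemma xor_lt_xor {a b M p : ℕ} (hab : a < b) (hp : a.testBit p ≠ b.testBit p)
    (hq : ∀ q, p < q → a.testBit q = b.testBit q) :
    (M.testBit p = false → a ^^^ M < b ^^^ M) ∧
    (M.testBit p = true → b ^^^ M < a ^^^ M) := by
  obtain ⟨ha, hb⟩ := msb_bits hab hp hq
  constructor
  · intro hM
    refine Nat.lt_of_testBit p ?_ ?_ ?_
    · rw [Nat.testBit_xor, ha, hM]; rfl
    · rw [Nat.testBit_xor, hb, hM]; rfl
    · intro j hj; rw [Nat.testBit_xor, Nat.testBit_xor, hq j hj]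
  · intro hM
    refine Nat.lt_of_testBit p ?_ ?_ ?_
    · rw [Nat.testBit_xor, hb, hM]; rfl
    · rw [Nat.testBit_xor, ha, hM]; rfl
    · intro j hj; rw [Nat.testBit_xor, Nat.testBit_xor, hq j hj]

lemma abs_middle_above {x y z : ℤ} (h1 : x < y) (h2 : z < y) :
    |x - z| < |x - y| + |y - z| := by
  rcases abs_cases (x - z) with ⟨h, _⟩ | ⟨h, _⟩ <;>
  rcases abs_cases (x - y) with ⟨h', _⟩ | ⟨h', _⟩ <;>
  rcases abs_cases (y - z) with ⟨h'', _⟩ | ⟨h'', _⟩ <;> omega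

lemma abs_middle_below {x y z : ℤ} (h1 : y < x) (h2 : y < z) :
    |x - z| < |x - y| + |y - z| := by
  rcases abs_cases (x - z) with ⟨h, _⟩ | ⟨h, _⟩ <;>
  rcases abs_cases (x - y) with ⟨h', _⟩ | ⟨h', _⟩ <;>
  rcases abs_cases (y - z) with ⟨h'', _⟩ | ⟨h'', _⟩ <;> omega

lemma d1_comm {n : ℕ} (u v : Fin n → ℤ) : d1 u v = d1 v u := by
  simp [d1, abs_sub_comm]

/-- Core case: strictly increasing triple. -/
lemma core {n m : ℕ} (hm : m + 1 = n) {a b c : ℕ}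
    (ha : a < 2 ^ 2 ^ m) (hc : c < 2 ^ 2 ^ m)
    (hab : a < b) (hbc : b < c) :
    d1 (pt n m a) (pt n m c) < d1 (pt n m a) (pt n m b) + d1 (pt n m b) (pt n m c) := by
  have hb : b < 2 ^ 2 ^ m := by omega
  obtain ⟨p, hp, hpq⟩ := exists_msb (show a ≠ b by omega)
  obtain ⟨q, hq, hqq⟩ := exists_msb (show b ≠ c by omega)
  have hbp : b.testBit p = true := (msb_bits hab hp hpq).2
  have hbq : b.testBit q = false := (msb_bits hbc hq hqq).1
  -- p, q < 2^m
  have hplt : p < 2 ^ m := by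
    by_contra hge
    push_neg at hge
    have : b < 2 ^ p := lt_of_lt_of_le hb (Nat.pow_le_pow_right (by norm_num) hge)
    rw [Nat.testBit_eq_false_of_lt this] at hbp
    exact Bool.false_ne_true hbp
  have hqlt : q < 2 ^ m := by
    by_contra hge
    push_neg at hge
    have hc2 : c < 2 ^ q := lt_of_lt_of_le hc (Nat.pow_le_pow_right (by norm_num) hge)
    have := (msb_bits hbc hq hqq).2
    rw [Nat.testBit_eq_false_of_lt hc2] at this
    exact Bool.false_ne_true this
  have hpq' : p ≠ q := by
    intro h; subst h; rw [hbp] at hbq; simp at hbq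
  obtain ⟨t, ht, -⟩ := exists_msb hpq'
  have htm : t < m := by
    by_contra hge
    push_neg at hge
    have h2 : (2:ℕ) ^ m ≤ 2 ^ t := Nat.pow_le_pow_right (by norm_num) hge
    rw [Nat.testBit_eq_false_of_lt (lt_of_lt_of_le hplt h2),
        Nat.testBit_eq_false_of_lt (lt_of_lt_of_le hqlt h2)] at ht
    exact ht rfl
  set j : Fin n := ⟨t + 1, by omega⟩ with hj
  have hmask : mask m (j : ℕ) = maskAux t (2 ^ m) := rfl
  have hMp : (mask m (j : ℕ)).testBit p = !p.testBit t := by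
    rw [hmask, testBit_maskAux]; simp [hplt]
  have hMq : (mask m (j : ℕ)).testBit q = !q.testBit t := by
    rw [hmask, testBit_maskAux]; simp [hqlt]
  -- strict inequality in coordinate j
  have hstrict : |pt n m a j - pt n m c j| <
      |pt n m a j - pt n m b j| + |pt n m b j - pt n m c j| := by
    have hxab := xor_lt_xor hab hp hpq (M := mask m (j : ℕ))
    have hxbc := xor_lt_xor hbc hq hqq (M := mask m (j : ℕ))
    simp only [pt]
    cases hpt : p.testBit t
    · have hqt : q.testBit t = true := by cases h : q.testBit t <;> simp_all
      have h1 : b ^^^ mask m (j:ℕ) < a ^^^ mask m (j:ℕ) := hxab.2 (by rw [hMp, hpt]; rfl)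
      have h2 : b ^^^ mask m (j:ℕ) < c ^^^ mask m (j:ℕ) := hxbc.1 (by rw [hMq, hqt]; rfl)
      exact abs_middle_below (by exact_mod_cast h1) (by exact_mod_cast h2)
    · have hqt : q.testBit t = false := by cases h : q.testBit t <;> simp_all
      have h1 : a ^^^ mask m (j:ℕ) < b ^^^ mask m (j:ℕ) := hxab.1 (by rw [hMp, hpt]; rfl)
      have h2 : c ^^^ mask m (j:ℕ) < b ^^^ mask m (j:ℕ) := hxbc.2 (by rw [hMq, hqt]; rfl)
      exact abs_middle_above (by exact_mod_cast h1) (by exact_mod_cast h2)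
  unfold d1
  rw [← Finset.sum_add_distrib]
  exact Finset.sum_lt_sum (fun j' _ => abs_sub_le _ _ _) ⟨j, Finset.mem_univ j, hstrict⟩

/-- Strict triangle inequality for any three distinct points of the family. -/
lemma strict_triangle {n m : ℕ} (hm : m + 1 = n) {a b c : ℕ}
    (ha : a < 2 ^ 2 ^ m) (hb : b < 2 ^ 2 ^ m) (hc : c < 2 ^ 2 ^ m)
    (hab : a ≠ b) (hbc : b ≠ c) (hac : a ≠ c) :
    d1 (pt n m a) (pt n m c) < d1 (pt n m a) (pt n m b) + d1 (pt n m b) (pt n m c) := by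
  have hpt0 : ∀ k : ℕ, pt n m k ⟨0, by omega⟩ = (k : ℤ) := by
    intro k; simp [pt, mask]
  have houtside : ∀ {x y z : ℕ}, (y < x ∧ y < z) ∨ (x < y ∧ z < y) →
      d1 (pt n m x) (pt n m z) < d1 (pt n m x) (pt n m y) + d1 (pt n m y) (pt n m z) := by
    intro x y z hcase
    have hstrict : |pt n m x ⟨0, by omega⟩ - pt n m z ⟨0, by omega⟩| <
        |pt n m x ⟨0, by omega⟩ - pt n m y ⟨0, by omega⟩| +
        |pt n m y ⟨0, by omega⟩ - pt n m z ⟨0, by omega⟩| := by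
      rw [hpt0, hpt0, hpt0]
      rcases hcase with ⟨h1, h2⟩ | ⟨h1, h2⟩
      · exact abs_middle_below (by exact_mod_cast h1) (by exact_mod_cast h2)
      · exact abs_middle_above (by exact_mod_cast h1) (by exact_mod_cast h2)
    unfold d1
    rw [← Finset.sum_add_distrib]
    exact Finset.sum_lt_sum (fun j' _ => abs_sub_le _ _ _)
      ⟨⟨0, by omega⟩, Finset.mem_univ _, hstrict⟩
  rcases Nat.lt_or_ge a b with h1 | h1
  · rcases Nat.lt_or_ge b c with h2 | h2
    · exact core hm ha hc h1 h2
    · have h2' : c < b := by omega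
      exact houtside (Or.inr ⟨h1, h2'⟩)
  · have h1' : b < a := by omega
    rcases Nat.lt_or_ge b c with h2 | h2
    · exact houtside (Or.inl ⟨h1', h2⟩)
    · have h2' : c < b := by omega
      have := core hm hc ha h2' h1'
      rw [d1_comm (pt n m c) (pt n m a), d1_comm (pt n m c) (pt n m b),
        d1_comm (pt n m b) (pt n m a)] at this
      omega

end GpAux

/-- If a connected graph `G` contains an isometric copy of a grid
`P_{i_1} □ ⋯ □ P_{i_n}` with `n ≥ 2` and all `i_j ≥ 2^(2^(n-1))`, then `G`
has a general position set of cardinality `2^(2^(n-1))`; in particular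
`gp(G) ≥ 2^(2^(n-1))`. -/
theorem gp_lower_bound_of_isometric_grid (n : ℕ) (hn : 2 ≤ n) (i : Fin n → ℤ)
    (hi : ∀ j, 2 ^ 2 ^ (n - 1) ≤ i j)
    (B : Set (Fin n → ℤ)) (hB : B = {u | ∀ j, 0 ≤ u j ∧ u j ≤ i j - 1})
    {V : Type*} (G : SimpleGraph V) (hG : G.Connected)
    (f : (Fin n → ℤ) → V)
    (hf : ∀ u ∈ B, ∀ v ∈ B, (G.dist (f u) (f v) : ℤ) = d1 u v) :
    ∃ S : Set V,
      S.encard = 2 ^ 2 ^ (n - 1) ∧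
      ∀ u ∈ S, ∀ v ∈ S, ∀ w ∈ S, u ≠ v → u ≠ w → v ≠ w →
        G.dist u w ≠ G.dist u v + G.dist v w := by
  classical
  set m := n - 1 with hm'
  have hm : m + 1 = n := by omega
  set N := 2 ^ 2 ^ m with hN
  -- the points are in the box
  have hmem : ∀ k < N, GpAux.pt n m k ∈ B := by
    intro k hk
    rw [hB]
    intro j
    have hlt : k ^^^ GpAux.mask m (j : ℕ) < N :=
      Nat.xor_lt_two_pow hk (GpAux.mask_lt m _)
    have hij := hi j
    have hNc : ((N : ℕ) : ℤ) = 2 ^ 2 ^ (n-1) := by rw [hN, hm']; push_cast; ring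
    have h3 : ((N : ℕ) : ℤ) ≤ i j := by rw [hNc]; exact hij
    constructor
    · simp only [GpAux.pt]; exact Int.natCast_nonneg _
    · simp only [GpAux.pt]
      have h2 : ((k ^^^ GpAux.mask m (j : ℕ) : ℕ) : ℤ) < ((N : ℕ) : ℤ) := by
        exact_mod_cast hlt
      omega
  -- injectivity of k ↦ f (pt k) on range N
  have hinj : Set.InjOn (fun k => f (GpAux.pt n m k)) ↑(Finset.range N) := by
    intro x hx y hy hxy
    simp only [Finset.coe_range, Set.mem_Iio] at hx hy
    by_contra hne
    have hxy' : f (GpAux.pt n m x) = f (GpAux.pt n m y) := hxy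
    have hd : (G.dist (f (GpAux.pt n m x)) (f (GpAux.pt n m y)) : ℤ) =
        d1 (GpAux.pt n m x) (GpAux.pt n m y) :=
      hf _ (hmem x hx) _ (hmem y hy)
    rw [hxy', SimpleGraph.dist_self] at hd
    have hd0 : d1 (GpAux.pt n m x) (GpAux.pt n m y) = 0 := by exact_mod_cast hd.symm
    have h0 : |GpAux.pt n m x ⟨0, by omega⟩ - GpAux.pt n m y ⟨0, by omega⟩| ≤ 0 := by
      calc |GpAux.pt n m x ⟨0, by omega⟩ - GpAux.pt n m y ⟨0, by omega⟩|
          ≤ d1 (GpAux.pt n m x) (GpAux.pt n m y) := by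
            unfold d1
            exact Finset.single_le_sum (f := fun j => |GpAux.pt n m x j - GpAux.pt n m y j|)
              (fun j _ => abs_nonneg _) (Finset.mem_univ _)
        _ ≤ 0 := le_of_eq hd0
    have hx0 : GpAux.pt n m x ⟨0, by omega⟩ = (x : ℤ) := by simp [GpAux.pt, GpAux.mask]
    have hy0 : GpAux.pt n m y ⟨0, by omega⟩ = (y : ℤ) := by simp [GpAux.pt, GpAux.mask]
    rw [hx0, hy0] at h0
    have habs := abs_nonneg ((x : ℤ) - y)
    have h1 : |(x:ℤ) - y| = 0 := le_antisymm h0 habs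
    have h2 := abs_eq_zero.mp h1
    omega
  refine ⟨↑((Finset.range N).image (fun k => f (GpAux.pt n m k))), ?_, ?_⟩
  · rw [Set.encard_coe_eq_coe_finsetCard, Finset.card_image_of_injOn hinj,
      Finset.card_range]
    push_cast [hN, hm']
    rfl
  · intro u hu v hv w hw huv huw hvw
    simp only [Finset.coe_image, Finset.coe_range, Set.mem_image, Set.mem_Iio] at hu hv hw
    obtain ⟨a, haN, rfl⟩ := hu
    obtain ⟨b, hbN, rfl⟩ := hv
    obtain ⟨c, hcN, rfl⟩ := hw
    have hab : a ≠ b := fun h => huv (by rw [h])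
    have hac : a ≠ c := fun h => huw (by rw [h])
    have hbc : b ≠ c := fun h => hvw (by rw [h])
    have hstrict := GpAux.strict_triangle hm haN hbN hcN hab hbc hac
    have e1 := hf _ (hmem a haN) _ (hmem c hcN)
    have e2 := hf _ (hmem a haN) _ (hmem b hbN)
    have e3 := hf _ (hmem b hbN) _ (hmem c hcN)
    intro heq
    have : (G.dist (f (GpAux.pt n m a)) (f (GpAux.pt n m c)) : ℤ) =
        (G.dist (f (GpAux.pt n m a)) (f (GpAux.pt n m b)) : ℤ) +
        (G.dist (f (GpAux.pt n m b)) (f (GpAux.pt n m c)) : ℤ) := by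
      exact_mod_cast congrArg (fun x : ℕ => (x : ℤ)) heq
    rw [e1, e2, e3] at this
    omega
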